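/- Let X be an abelian group with an invariant metric d. If there exists a continuous positive definite function f : X → ℝ such that f(0) = 1 and g_f(t) > 0 for every t > 0, where g_f(t) = inf{ 1 − f(x) : d(x,0) ≥ t }, then X uniformly embeds into the unit sphere of a real Hilbert space. -/

import Mathlib

/-- A symmetric real-valued function on `X × X` is a positive definite kernel. -/
def IsPosDefKernel {X : Type*} (K : X → X → ℝ) : Prop :=
  (∀ x y, K x y = K y x) ∧
  ∀ (n : ℕ) (x : Fin n → X) (c : Fin n → ℝ),
    0 ≤ ∑ i, ∑ j, K (x i) (x j) * c i * c j

/-- `T` is a uniform embedding: `T` is injective and both `T` and its inverse on the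
image are uniformly continuous. -/
def IsUnifEmb {X Y : Type*} (dX : X → X → ℝ) (dY : Y → Y → ℝ) (T : X → Y) : Prop :=
  Function.Injective T ∧
  (∀ ε > (0 : ℝ), ∃ δ > (0 : ℝ), ∀ x y, dX x y < δ → dY (T x) (T y) < ε) ∧
  (∀ ε > (0 : ℝ), ∃ δ > (0 : ℝ), ∀ x y, dY (T x) (T y) < δ → dX x y < ε)

universe u

section KerAux

variable {X : Type u} [AddCommGroup X]

noncomputable def kerPhi (f : X → ℝ) (x : X) : (X →₀ ℝ) →ₗ[ℝ] ℝ :=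
  Finsupp.lsum ℝ fun y => LinearMap.toSpanSingleton ℝ ℝ (f (x - y))

noncomputable def kerB (f : X → ℝ) : (X →₀ ℝ) →ₗ[ℝ] (X →₀ ℝ) →ₗ[ℝ] ℝ :=
  Finsupp.lsum ℝ fun x => LinearMap.toSpanSingleton ℝ _ (kerPhi f x)

lemma kerB_single (f : X → ℝ) (x y : X) (a b : ℝ) :
    kerB f (Finsupp.single x a) (Finsupp.single y b) = a * (b * f (x - y)) := by
  simp [kerB, kerPhi, LinearMap.toSpanSingleton_apply, smul_eq_mul]

lemma kerB_symm (f : X → ℝ) (hsym : ∀ x y : X, f (x - y) = f (y - x)) (μ ν : X →₀ ℝ) :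
    kerB f μ ν = kerB f ν μ := by
  have h : kerB f = (kerB f).flip := by
    apply Finsupp.lhom_ext
    intro x a
    apply Finsupp.lhom_ext
    intro y b
    simp only [LinearMap.flip_apply, kerB_single, hsym x y]
    ring
  conv_lhs => rw [h]
  rfl

lemma kerB_apply_apply (f : X → ℝ) (μ ν : X →₀ ℝ) :
    kerB f μ ν = ∑ x ∈ μ.support, ∑ y ∈ ν.support, μ x * (ν y * f (x - y)) := by
  simp [kerB, kerPhi, Finsupp.lsum_apply, Finsupp.sum, LinearMap.toSpanSingleton_apply,
    smul_eq_mul, LinearMap.coe_sum, Finset.sum_apply, Finset.mul_sum]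

lemma kerB_self_nonneg (f : X → ℝ)
    (hpos : ∀ (n : ℕ) (x : Fin n → X) (c : Fin n → ℝ),
      0 ≤ ∑ i, ∑ j, f (x i - x j) * c i * c j) (μ : X →₀ ℝ) :
    0 ≤ kerB f μ μ := by
  rw [kerB_apply_apply]
  set s := μ.support with hs
  let e : s ≃ Fin s.card := s.equivFin
  have key : ∑ x ∈ s, ∑ y ∈ s, μ x * (μ y * f (x - y))
      = ∑ i, ∑ j, f ((e.symm i : X) - (e.symm j : X)) * μ (e.symm i) * μ (e.symm j) := by
    rw [← Finset.sum_coe_sort s]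
    rw [← Equiv.sum_comp e.symm (fun a : s => ∑ y ∈ s, μ a * (μ y * f ((a : X) - y)))]
    refine Finset.sum_congr rfl fun i _ => ?_
    rw [← Finset.sum_coe_sort s]
    rw [← Equiv.sum_comp e.symm (fun b : s => μ (e.symm i) * (μ b * f ((e.symm i : X) - b)))]
    refine Finset.sum_congr rfl fun j _ => ?_
    ring
  rw [key]
  exact hpos s.card (fun i => (e.symm i : X)) (fun i => μ (e.symm i))

end KerAux

/-- Let `X` be an abelian group with an invariant metric. If there is a continuous positive
definite function `f : X → ℝ` with `f 0 = 1` such that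
`g_f t = inf {1 - f x : d(x,0) ≥ t} > 0` for every `t > 0` (expressed here by: for every
`t > 0` there is `c > 0` with `1 - f x ≥ c` whenever `d(x,0) ≥ t`), then `X` uniformly
embeds into the unit sphere of a real Hilbert space. -/
theorem unifEmb_into_sphere_of_posDef
    {X : Type u} [AddCommGroup X] [MetricSpace X]
    (hinv : ∀ x y z : X, dist (x + z) (y + z) = dist x y)
    (f : X → ℝ) (hcont : Continuous f)
    (hpos : IsPosDefKernel (fun x y => f (x - y))) (h0 : f 0 = 1)
    (hg : ∀ t > (0 : ℝ), ∃ c > (0 : ℝ), ∀ x : X, t ≤ dist x 0 → c ≤ 1 - f x) :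
    ∃ (H : Type u) (_ : NormedAddCommGroup H) (_ : InnerProductSpace ℝ H)
      (_ : CompleteSpace H) (T : X → H),
      (∀ x, ‖T x‖ = 1) ∧
      IsUnifEmb (fun x y => dist x y) (fun u v => dist u v) T := by
  classical
  -- invariance consequence
  have hdist : ∀ x y : X, dist (x - y) 0 = dist x y := fun x y => by
    have := hinv (x - y) 0 y
    simpa using this.symm
  -- the pre-inner-product space
  set V := (X →₀ ℝ) with hV
  letI core : PreInnerProductSpace.Core ℝ V :=
    { inner := fun μ ν => kerB f μ ν
      conj_inner_symm := fun μ ν => by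
        simpa using kerB_symm f (fun x y => hpos.1 x y) ν μ
      re_inner_nonneg := fun μ => by
        simpa using kerB_self_nonneg f (fun n x c => by simpa using hpos.2 n x c) μ
      add_left := fun μ ν ρ => by simp
      smul_left := fun μ ν r => by simp }
  letI : SeminormedAddCommGroup V := InnerProductSpace.Core.toSeminormedAddCommGroup (𝕜 := ℝ)
  letI : NormedSpace ℝ V := InnerProductSpace.Core.toNormedSpace (𝕜 := ℝ)
  letI : InnerProductSpace ℝ V :=
    { core with
      norm_sq_eq_re_inner := fun μ => by
        have h1 : ‖μ‖ = Real.sqrt (RCLike.re (@inner ℝ V core.toInner μ μ)) := rfl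
        rw [h1, Real.sq_sqrt (core.re_inner_nonneg μ)] }
  -- inner products of singles
  have hinner : ∀ x y : X,
      (inner ℝ (Finsupp.single x (1:ℝ) : V) (Finsupp.single y (1:ℝ)) : ℝ) = f (x - y) := by
    intro x y
    show kerB f _ _ = _
    rw [kerB_single]; ring
  set T : X → UniformSpace.Completion V :=
    fun x => ((Finsupp.single x (1:ℝ) : V) : UniformSpace.Completion V) with hT
  have hTin : ∀ x y : X, (inner ℝ (T x) (T y) : ℝ) = f (x - y) := by
    intro x y
    rw [hT]
    rw [UniformSpace.Completion.inner_coe]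
    exact hinner x y
  have hnorm : ∀ x : X, ‖T x‖ = 1 := by
    intro x
    have h2 : ‖T x‖ ^ 2 = 1 := by
      rw [← real_inner_self_eq_norm_sq, hTin, sub_self, h0]
    rw [← Real.sqrt_sq (norm_nonneg (T x)), h2, Real.sqrt_one]
  have hdT : ∀ x y : X, dist (T x) (T y) ^ 2 = 2 - 2 * f (x - y) := by
    intro x y
    rw [dist_eq_norm, @norm_sub_sq_real, hnorm x, hnorm y, hTin]
    ring
  refine ⟨UniformSpace.Completion V, inferInstance, inferInstance, inferInstance,
    T, hnorm, ?_, ?_, ?_⟩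
  · -- injectivity
    intro x y hxy
    by_contra hne
    obtain ⟨c, hc, hcle⟩ := hg (dist x y) (dist_pos.mpr hne)
    have h1 : c ≤ 1 - f (x - y) := hcle (x - y) (by rw [hdist])
    have h2 : f (x - y) = 1 := by
      rw [← hTin x y, hxy, hTin y y, sub_self, h0]
    linarith
  · -- forward uniform continuity
    intro ε hε
    obtain ⟨δ, hδ, hδ'⟩ := Metric.continuous_iff.mp hcont 0 (ε ^ 2 / 2) (by positivity)
    refine ⟨δ, hδ, fun x y hxy => ?_⟩
    have h1 : dist (f (x - y)) (f 0) < ε ^ 2 / 2 := hδ' (x - y) (by rw [hdist]; exact hxy)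
    rw [h0, Real.dist_eq] at h1
    have h2 : 1 - f (x - y) < ε ^ 2 / 2 := lt_of_le_of_lt (by rw [abs_sub_comm]; exact le_abs_self _) h1
    have h3 : dist (T x) (T y) ^ 2 < ε ^ 2 := by rw [hdT]; linarith
    nlinarith [dist_nonneg (x := T x) (y := T y)]
  · -- inverse uniform continuity
    intro ε hε
    obtain ⟨c, hc, hcle⟩ := hg ε hε
    refine ⟨Real.sqrt (2 * c), Real.sqrt_pos.mpr (by linarith), fun x y hxy => ?_⟩
    have hsq : dist (T x) (T y) ^ 2 < 2 * c := by
      have h1 : Real.sqrt (2 * c) ^ 2 = 2 * c := Real.sq_sqrt (by linarith)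
      nlinarith [dist_nonneg (x := T x) (y := T y), Real.sqrt_nonneg (2 * c)]
    rw [hdT] at hsq
    by_contra hge
    push_neg at hge
    have := hcle (x - y) (by rw [hdist]; exact hge)
    linarith
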